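/- Every absolutely 2-summing operator L : H → B from a separable Hilbert space H to a Banach space B is absolutely 1-summing. -/

import Mathlib

open Filter Topology
open scoped RealInnerProductSpace

/-- A measure on a topological vector space is a *centred Gaussian measure* if the pushforward
under every continuous linear functional is a centred Gaussian measure on `ℝ`. -/
def IsCentredGaussian {X : Type*} [TopologicalSpace X] [AddCommGroup X] [Module ℝ X]
    [MeasurableSpace X] (μ : MeasureTheory.Measure X) : Prop :=
  ∀ φ : X →L[ℝ] ℝ, ∃ v : NNReal, μ.map φ = ProbabilityTheory.gaussianReal 0 v

/-- `(Y, ι)` is a Banach completion of `X` with respect to the seminorm `p`: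
`ι` is isometric for `p` and has dense range.  (Completeness of `Y` is an instance
assumption at use sites.) -/
structure IsBanachCompletion {X : Type*} [AddCommGroup X] [Module ℝ X]
    {Y : Type*} [NormedAddCommGroup Y] [NormedSpace ℝ Y]
    (p : Seminorm ℝ X) (ι : X →ₗ[ℝ] Y) : Prop where
  norm_map : ∀ x, ‖ι x‖ = p x
  dense_range : DenseRange ι

/-- A linear operator between normed spaces is *absolutely `r`-summing*. -/
def AbsolutelySumming {E F : Type*} [NormedAddCommGroup E] [NormedSpace ℝ E]
    [NormedAddCommGroup F] [NormedSpace ℝ F] (r : ℝ) (T : E →ₗ[ℝ] F) : Prop :=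
  ∃ C : ℝ, 0 < C ∧ ∀ (k : ℕ) (x : Fin k → E),
    (∑ n, ‖T (x n)‖ ^ r) ^ (1 / r) ≤
      C * ⨆ φ : {ψ : E →L[ℝ] ℝ // ‖ψ‖ ≤ 1}, (∑ n, |φ.1 (x n)| ^ r) ^ (1 / r)

/-- A map between inner product spaces is *Hilbert–Schmidt* if the squared norms of the images
of some Hilbert basis are summable. -/
def IsHilbertSchmidtMap {H J : Type*} [NormedAddCommGroup H] [InnerProductSpace ℝ H]
    [NormedAddCommGroup J] [InnerProductSpace ℝ J] (L : H → J) : Prop :=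
  ∃ (ι : Type) (b : HilbertBasis ι ℝ H), Summable fun i => ‖L (b i)‖ ^ 2

/-- `(H, ι)` is (a realization of) the Cameron–Martin space of the measure `μ`:
`ι` is a continuous linear injection whose range is the set of vectors of finite
Cameron–Martin norm, and the Hilbert norm of `H` is the Cameron–Martin norm. -/
structure IsCameronMartin {X : Type*} [TopologicalSpace X] [AddCommGroup X] [Module ℝ X]
    [MeasurableSpace X] {H : Type*} [NormedAddCommGroup H] [InnerProductSpace ℝ H]
    (μ : MeasureTheory.Measure X) (ι : H →ₗ[ℝ] X) : Prop where
  continuous : Continuous ι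
  injective : Function.Injective ι
  norm_eq : ∀ h : H,
    ‖h‖ = sSup {c : ℝ | ∃ φ : X →L[ℝ] ℝ, (∫ y, (φ y) ^ 2 ∂μ) ≤ 1 ∧ c = φ (ι h)}
  range_eq : Set.range ι =
    {x : X | ∃ M : ℝ, ∀ φ : X →L[ℝ] ℝ, (∫ y, (φ y) ^ 2 ∂μ) ≤ 1 → φ x ≤ M}

/-- A seminorm is a *Hilbert seminorm* if it is induced by a positive semidefinite symmetric
bilinear form. -/
def IsHilbertSeminorm {X : Type*} [AddCommGroup X] [Module ℝ X] (p : Seminorm ℝ X) : Prop :=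
  ∃ B : X →ₗ[ℝ] X →ₗ[ℝ] ℝ, (∀ x y, B x y = B y x) ∧ (∀ x, 0 ≤ B x x) ∧
    ∀ x, p x = Real.sqrt (B x x)

/-- A continuous linear map between normed spaces is *nuclear*. -/
def IsNuclearMap {E F : Type*} [NormedAddCommGroup E] [NormedSpace ℝ E]
    [NormedAddCommGroup F] [NormedSpace ℝ F] (T : E →L[ℝ] F) : Prop :=
  ∃ (φ : ℕ → E →L[ℝ] ℝ) (y : ℕ → F),
    Summable (fun n => ‖φ n‖ * ‖y n‖) ∧ ∀ x, HasSum (fun n => φ n x • y n) (T x)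

/-- A locally convex space is *nuclear* if for every continuous Hilbert seminorm `p` there is a
continuous Hilbert seminorm `r ≥ p` such that the natural map `X_r → X_p` between the Banach
completions is nuclear. -/
def IsNuclearSpace (X : Type*) [AddCommGroup X] [Module ℝ X] [TopologicalSpace X] : Prop :=
  ∀ p : Seminorm ℝ X, Continuous p → IsHilbertSeminorm p →
    ∃ r : Seminorm ℝ X, Continuous r ∧ IsHilbertSeminorm r ∧ p ≤ r ∧
      ∀ (Xr Xp : Type) [NormedAddCommGroup Xr] [NormedSpace ℝ Xr] [CompleteSpace Xr]
        [NormedAddCommGroup Xp] [NormedSpace ℝ Xp] [CompleteSpace Xp]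
        (ιr : X →ₗ[ℝ] Xr) (ιp : X →ₗ[ℝ] Xp), IsBanachCompletion r ιr →
          IsBanachCompletion p ιp →
          ∀ T : Xr →L[ℝ] Xp, (∀ x, T (ιr x) = ιp x) → IsNuclearMap T


section AuxSummingProof
open Finset
open scoped RealInnerProductSpace

noncomputable def sgn (b : Bool) : ℝ := if b then 1 else -1

lemma sgn_mul_self (b : Bool) : sgn b * sgn b = 1 := by cases b <;> simp [sgn]

lemma sgn_not (b : Bool) : sgn (!b) = - sgn b := by cases b <;> simp [sgn]

lemma abs_sgn (b : Bool) : |sgn b| = 1 := by cases b <;> simp [sgn]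

/-- orthogonality of signs -/
lemma sgn_ortho {ι : Type} [Fintype ι] [DecidableEq ι] {i j : ι} (hij : i ≠ j) :
    ∑ ε : ι → Bool, sgn (ε i) * sgn (ε j) = 0 := by
  refine Finset.sum_involution (fun ε _ => Function.update ε i (!(ε i))) ?_ ?_ (fun ε _ => Finset.mem_univ _) ?_
  · intro ε _
    rw [Function.update_self, Function.update_of_ne hij.symm, sgn_not]
    ring
  · intro ε _ h hc
    apply h
    have h2 : ε i = !(ε i) := by
      conv_lhs => rw [← hc]
      rw [Function.update_self]
    simp at h2
  · intro ε _
    funext x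
    by_cases hx : x = i
    · subst hx; simp
    · simp [Function.update_of_ne hx]

lemma sgn_sum_mul {ι : Type} [Fintype ι] [DecidableEq ι] (a b : ι → ℝ) :
    ∑ ε : ι → Bool, (∑ i, sgn (ε i) * a i) * (∑ j, sgn (ε j) * b j)
      = 2 ^ (Fintype.card ι) * ∑ i, a i * b i := by
  have expand : ∀ ε : ι → Bool, (∑ i, sgn (ε i) * a i) * (∑ j, sgn (ε j) * b j)
      = ∑ i, ∑ j, (a i * b j) * (sgn (ε i) * sgn (ε j)) := by
    intro ε
    rw [Finset.sum_mul_sum]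
    congr 1; funext i; congr 1; funext j; ring
  simp only [expand]
  rw [Finset.sum_comm]
  have inner : ∀ i : ι, ∑ ε : ι → Bool, ∑ j, (a i * b j) * (sgn (ε i) * sgn (ε j))
      = 2 ^ (Fintype.card ι) * (a i * b i) := by
    intro i
    rw [Finset.sum_comm]
    rw [Finset.sum_eq_single i]
    · simp only [← Finset.mul_sum]
      have : ∑ ε : ι → Bool, sgn (ε i) * sgn (ε i) = 2 ^ (Fintype.card ι) := by
        simp only [sgn_mul_self]
        simp [Fintype.card_fun]
      rw [this]; ring
    · intro j _ hj
      simp only [← Finset.mul_sum]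
      rw [sgn_ortho (Ne.symm hj)]
      ring
    · intro h; exact absurd (Finset.mem_univ i) h
  simp only [inner, ← Finset.mul_sum]

lemma sgn_sum_sq {ι : Type} [Fintype ι] [DecidableEq ι] (a : ι → ℝ) :
    ∑ ε : ι → Bool, (∑ i, sgn (ε i) * a i) ^ 2 = 2 ^ (Fintype.card ι) * ∑ i, (a i) ^ 2 := by
  simpa [sq] using sgn_sum_mul a a

lemma sgn_sum_pow4 : ∀ (m : ℕ) (a : Fin m → ℝ),
    ∑ ε : Fin m → Bool, (∑ i, sgn (ε i) * a i) ^ 4 ≤ 3 * 2 ^ m * (∑ i, (a i) ^ 2) ^ 2 := by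
  intro m
  induction m with
  | zero => intro a; simp
  | succ m ih =>
    intro a
    rw [← Fintype.sum_equiv (Fin.consEquiv (fun _ : Fin (m+1) => Bool))
        (fun p => (∑ i, sgn ((Fin.consEquiv (fun _ => Bool)) p i) * a i) ^ 4)
        (fun ε => (∑ i, sgn (ε i) * a i) ^ 4) (fun p => rfl)]
    have eval : ∀ p : Bool × (Fin m → Bool), ∑ i, sgn ((Fin.consEquiv (fun _ => Bool)) p i) * a i
        = sgn p.1 * a 0 + ∑ i : Fin m, sgn (p.2 i) * a i.succ := by
      intro p
      rw [Fin.sum_univ_succ]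
      congr 1
    simp only [eval]
    rw [Fintype.sum_prod_type_right]
    have hsumbool : ∀ b0 S : ℝ, (∑ b : Bool, (sgn b * b0 + S) ^ 4)
        = 2 * S ^ 4 + 12 * S ^ 2 * b0 ^ 2 + 2 * b0 ^ 4 := by
      intro S b0
      simp [sgn]
      ring
    simp only [hsumbool]
    rw [Finset.sum_add_distrib, Finset.sum_add_distrib]
    have h4 := ih (fun i => a i.succ)
    have h2 : ∑ ε : Fin m → Bool, (∑ i : Fin m, sgn (ε i) * a i.succ) ^ 2
        = 2 ^ m * ∑ i : Fin m, (a i.succ) ^ 2 := by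
      simpa using sgn_sum_sq (fun i : Fin m => a i.succ)
    have hconst : ∑ _ε : Fin m → Bool, 2 * (a 0) ^ 4 = 2 ^ m * (2 * (a 0) ^ 4) := by
      rw [Finset.sum_const]
      simp [Fintype.card_fun]
    have hmid : ∑ ε : Fin m → Bool, 12 * (∑ i : Fin m, sgn (ε i) * a i.succ) ^ 2 * (a 0) ^ 2
        = 12 * (2 ^ m * ∑ i : Fin m, (a i.succ) ^ 2) * (a 0) ^ 2 := by
      rw [← Finset.sum_mul, ← Finset.mul_sum, h2]
    have hfirst : ∑ ε : Fin m → Bool, 2 * (∑ i : Fin m, sgn (ε i) * a i.succ) ^ 4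
        ≤ 2 * (3 * 2 ^ m * (∑ i : Fin m, (a i.succ) ^ 2) ^ 2) := by
      rw [← Finset.mul_sum]
      have := ih (fun i => a i.succ)
      nlinarith [this]
    rw [Fin.sum_univ_succ (f := fun i => (a i) ^ 2)]
    have hσ : (0:ℝ) ≤ ∑ i : Fin m, (a i.succ) ^ 2 := Finset.sum_nonneg fun i _ => sq_nonneg _
    calc ∑ ε : Fin m → Bool, 2 * (∑ i : Fin m, sgn (ε i) * a i.succ) ^ 4
          + ∑ ε : Fin m → Bool, 12 * (∑ i : Fin m, sgn (ε i) * a i.succ) ^ 2 * a 0 ^ 2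
          + ∑ _ε : Fin m → Bool, 2 * a 0 ^ 4
        ≤ 2 * (3 * 2 ^ m * (∑ i : Fin m, (a i.succ) ^ 2) ^ 2)
          + 12 * (2 ^ m * ∑ i : Fin m, (a i.succ) ^ 2) * (a 0) ^ 2
          + 2 ^ m * (2 * (a 0) ^ 4) := by
          rw [hmid, hconst]
          exact add_le_add_left (add_le_add_left hfirst _) _
      _ ≤ 3 * 2 ^ (m+1) * (a 0 ^ 2 + ∑ i : Fin m, a i.succ ^ 2) ^ 2 := by
          have h2m : (0:ℝ) < 2 ^ m := by positivity
          have hpow : (2:ℝ) ^ (m+1) = 2 * 2 ^ m := by ring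
          rw [hpow]
          nlinarith [mul_nonneg h2m.le (sq_nonneg (a 0 ^ 2)), mul_nonneg (mul_nonneg h2m.le hσ) (sq_nonneg (a 0))]

lemma sgn_sum_pow4' {ι : Type} [Fintype ι] [DecidableEq ι] (a : ι → ℝ) :
    ∑ ε : ι → Bool, (∑ i, sgn (ε i) * a i) ^ 4
      ≤ 3 * 2 ^ (Fintype.card ι) * (∑ i, (a i) ^ 2) ^ 2 := by
  classical
  set m := Fintype.card ι
  let e := Fintype.equivFin ι
  have h1 : ∑ ε : ι → Bool, (∑ i, sgn (ε i) * a i) ^ 4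
      = ∑ ε' : Fin m → Bool, (∑ i' , sgn (ε' i') * a (e.symm i')) ^ 4 := by
    refine Fintype.sum_equiv (Equiv.arrowCongr e (Equiv.refl Bool))
      (fun ε : ι → Bool => (∑ i, sgn (ε i) * a i) ^ 4)
      (fun ε' : Fin m → Bool => (∑ i', sgn (ε' i') * a (e.symm i')) ^ 4) ?_
    intro ε
    show (∑ i, sgn (ε i) * a i) ^ 4
      = (∑ i', sgn ((Equiv.arrowCongr e (Equiv.refl Bool)) ε i') * a (e.symm i')) ^ 4
    congr 1
    refine Fintype.sum_equiv e (fun i : ι => sgn (ε i) * a i)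
      (fun i' : Fin m => sgn ((Equiv.arrowCongr e (Equiv.refl Bool)) ε i') * a (e.symm i')) ?_
    intro i
    simp [Equiv.arrowCongr]
  have h2 : ∑ i, (a i) ^ 2 = ∑ i', (a (e.symm i')) ^ 2 :=
    (Fintype.sum_equiv e.symm _ _ fun i' => rfl).symm
  rw [h1, h2]
  exact sgn_sum_pow4 m _

lemma khintchine {ι : Type} [Fintype ι] [DecidableEq ι] (a : ι → ℝ) :
    (2:ℝ) ^ (Fintype.card ι) * Real.sqrt (∑ i, (a i) ^ 2)
      ≤ Real.sqrt 3 * ∑ ε : ι → Bool, |∑ i, sgn (ε i) * a i| := by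
  classical
  set N : ℝ := (2:ℝ) ^ (Fintype.card ι) with hN
  have hNpos : 0 < N := by positivity
  set X : (ι → Bool) → ℝ := fun ε => ∑ i, sgn (ε i) * a i with hX
  set σ2 := ∑ i, (a i) ^ 2 with hσ2
  have hσ2nn : 0 ≤ σ2 := Finset.sum_nonneg fun i _ => sq_nonneg _
  set E1 := ∑ ε : ι → Bool, |X ε| with hE1
  have hE1nn : 0 ≤ E1 := Finset.sum_nonneg fun ε _ => abs_nonneg _
  rcases eq_or_lt_of_le hσ2nn with h0 | hσ2pos
  · rw [← h0]
    simp
    positivity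
  set E2 := ∑ ε : ι → Bool, (X ε) ^ 2 with hE2
  set E3 := ∑ ε : ι → Bool, |X ε| ^ 3 with hE3
  set E4 := ∑ ε : ι → Bool, (X ε) ^ 4 with hE4
  have hE2eq : E2 = N * σ2 := by
    rw [hE2, hX, hσ2, hN]
    exact_mod_cast sgn_sum_sq a
  have hE4le : E4 ≤ 3 * N * σ2 ^ 2 := by
    rw [hE4, hX, hσ2, hN]
    exact_mod_cast sgn_sum_pow4' a
  have hE4nn : 0 ≤ E4 := Finset.sum_nonneg fun ε _ => by positivity
  have hE2nn : 0 ≤ E2 := Finset.sum_nonneg fun ε _ => sq_nonneg _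
  have hE3nn : 0 ≤ E3 := Finset.sum_nonneg fun ε _ => by positivity
  -- CS1 : E2^2 ≤ E1 * E3
  have cs1 : E2 ^ 2 ≤ E1 * E3 := by
    have h := Finset.sum_mul_sq_le_sq_mul_sq Finset.univ
      (fun ε : ι → Bool => Real.sqrt |X ε|) (fun ε => |X ε| * Real.sqrt |X ε|)
    have hid : ∀ ε : ι → Bool, Real.sqrt |X ε| * (|X ε| * Real.sqrt |X ε|) = (X ε)^2 := by
      intro ε
      rw [show Real.sqrt |X ε| * (|X ε| * Real.sqrt |X ε|)
          = (Real.sqrt |X ε| * Real.sqrt |X ε|) * |X ε| by ring,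
        Real.mul_self_sqrt (abs_nonneg _), ← abs_mul, abs_mul_self, ← sq]
    have hsq : ∀ ε : ι → Bool, (Real.sqrt |X ε|) ^ 2 = |X ε| := fun ε =>
      Real.sq_sqrt (abs_nonneg _)
    have hg : ∀ ε : ι → Bool, (|X ε| * Real.sqrt |X ε|) ^ 2 = |X ε| ^ 3 := by
      intro ε
      rw [mul_pow, hsq]
      ring
    calc E2 ^ 2 = (∑ ε : ι → Bool, Real.sqrt |X ε| * (|X ε| * Real.sqrt |X ε|)) ^ 2 := by
          rw [hE2]; congr 1; exact (Finset.sum_congr rfl fun ε _ => hid ε).symm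
      _ ≤ (∑ ε : ι → Bool, (Real.sqrt |X ε|) ^ 2) * (∑ ε : ι → Bool, (|X ε| * Real.sqrt |X ε|) ^ 2) := h
      _ = E1 * E3 := by
          rw [hE1, hE3]
          congr 1
          · exact Finset.sum_congr rfl fun ε _ => hsq ε
          · exact Finset.sum_congr rfl fun ε _ => hg ε
  -- CS2 : E3^2 ≤ E2 * E4
  have cs2 : E3 ^ 2 ≤ E2 * E4 := by
    have h := Finset.sum_mul_sq_le_sq_mul_sq Finset.univ
      (fun ε : ι → Bool => |X ε|) (fun ε => (X ε) ^ 2)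
    calc E3 ^ 2 = (∑ ε : ι → Bool, |X ε| * (X ε) ^ 2) ^ 2 := by
          rw [hE3]; congr 1; refine Finset.sum_congr rfl fun ε _ => ?_
          rw [← sq_abs (X ε)]; ring
      _ ≤ (∑ ε : ι → Bool, |X ε| ^ 2) * (∑ ε : ι → Bool, ((X ε) ^ 2) ^ 2) := h
      _ = E2 * E4 := by
          rw [hE2, hE4]
          congr 1
          · exact Finset.sum_congr rfl fun ε _ => by rw [sq_abs (X ε)]
          · exact Finset.sum_congr rfl fun ε _ => by ring
  have hE3le : E3 ≤ Real.sqrt (E2 * E4) := by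
    rw [← Real.sqrt_sq hE3nn]
    exact Real.sqrt_le_sqrt cs2
  have key : E2 ^ 2 ≤ E1 * Real.sqrt (E2 * E4) := le_trans cs1 (by
    exact mul_le_mul_of_nonneg_left hE3le hE1nn)
  have hsqeq : (N * σ2) * (3 * N * σ2 ^ 2) = (Real.sqrt 3 * N * σ2 * Real.sqrt σ2) ^ 2 := by
    rw [mul_pow, mul_pow, mul_pow, Real.sq_sqrt (by norm_num : (0:ℝ) ≤ 3),
      Real.sq_sqrt hσ2nn]
    ring
  have hsqrtbound : Real.sqrt (E2 * E4) ≤ Real.sqrt 3 * N * σ2 * Real.sqrt σ2 := by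
    have h1 : E2 * E4 ≤ (N * σ2) * (3 * N * σ2 ^ 2) := by
      rw [hE2eq]
      exact mul_le_mul_of_nonneg_left hE4le (by positivity)
    calc Real.sqrt (E2 * E4) ≤ Real.sqrt ((N * σ2) * (3 * N * σ2 ^ 2)) := Real.sqrt_le_sqrt h1
      _ = Real.sqrt 3 * N * σ2 * Real.sqrt σ2 := by
          rw [hsqeq, Real.sqrt_sq (by positivity)]
  have key2 : E2 ^ 2 ≤ E1 * (Real.sqrt 3 * N * σ2 * Real.sqrt σ2) :=
    le_trans key (mul_le_mul_of_nonneg_left hsqrtbound hE1nn)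
  have hP : 0 < N * σ2 * Real.sqrt σ2 :=
    mul_pos (mul_pos hNpos hσ2pos) (Real.sqrt_pos.mpr hσ2pos)
  have hmain : (N * Real.sqrt σ2) * (N * σ2 * Real.sqrt σ2)
      ≤ (Real.sqrt 3 * E1) * (N * σ2 * Real.sqrt σ2) := by
    have hL : (N * Real.sqrt σ2) * (N * σ2 * Real.sqrt σ2) = E2 ^ 2 := by
      rw [hE2eq]
      rw [show (N * Real.sqrt σ2) * (N * σ2 * Real.sqrt σ2)
        = N * N * σ2 * (Real.sqrt σ2 * Real.sqrt σ2) by ring,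
        Real.mul_self_sqrt hσ2nn]
      ring
    have hR : (Real.sqrt 3 * E1) * (N * σ2 * Real.sqrt σ2)
        = E1 * (Real.sqrt 3 * N * σ2 * Real.sqrt σ2) := by ring
    rw [hL, hR]
    exact key2
  exact le_of_mul_le_mul_right hmain hP

variable {H : Type} [NormedAddCommGroup H] [InnerProductSpace ℝ H]

lemma sgn_sum_bilin {ι : Type} [Fintype ι] [DecidableEq ι] (M : ι → ι → ℝ) :
    ∑ ε : ι → Bool, ∑ i, ∑ j, sgn (ε i) * sgn (ε j) * M i j
      = 2 ^ (Fintype.card ι) * ∑ i, M i i := by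
  rw [Finset.sum_comm]
  have inner : ∀ i : ι, ∑ ε : ι → Bool, ∑ j, sgn (ε i) * sgn (ε j) * M i j
      = 2 ^ (Fintype.card ι) * M i i := by
    intro i
    rw [Finset.sum_comm, Finset.sum_eq_single i]
    · have : ∀ ε : ι → Bool, sgn (ε i) * sgn (ε i) * M i i = M i i := by
        intro ε; rw [sgn_mul_self]; ring
      simp only [this]
      rw [Finset.sum_const]
      simp [Fintype.card_fun]
    · intro j _ hj
      rw [← Finset.sum_mul, sgn_ortho (Ne.symm hj), zero_mul]
    · intro h; exact absurd (Finset.mem_univ i) h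
  simp only [inner, ← Finset.mul_sum]

variable {H : Type} [NormedAddCommGroup H] [InnerProductSpace ℝ H]

lemma inner_sgn_sum {ι : Type} [Fintype ι] (u : ι → H) (ε : ι → Bool) (y : H) :
    ⟪∑ i, sgn (ε i) • u i, y⟫ = ∑ i, sgn (ε i) * ⟪u i, y⟫ := by
  rw [sum_inner]
  exact Finset.sum_congr rfl fun i _ => real_inner_smul_left _ _ _

lemma sgn_sum_norm_sq {ι : Type} [Fintype ι] [DecidableEq ι] (u : ι → H) :
    ∑ ε : ι → Bool, ‖∑ i, sgn (ε i) • u i‖ ^ 2 = 2 ^ (Fintype.card ι) * ∑ i, ‖u i‖ ^ 2 := by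
  have expand : ∀ ε : ι → Bool, ‖∑ i, sgn (ε i) • u i‖ ^ 2
      = ∑ i, ∑ j, sgn (ε i) * sgn (ε j) * ⟪u i, u j⟫ := by
    intro ε
    rw [← real_inner_self_eq_norm_sq, inner_sgn_sum]
    refine Finset.sum_congr rfl fun i _ => ?_
    rw [inner_sum]
    rw [Finset.mul_sum]
    refine Finset.sum_congr rfl fun j _ => ?_
    rw [real_inner_smul_right]
    ring
  simp only [expand]
  rw [sgn_sum_bilin]
  congr 1
  exact Finset.sum_congr rfl fun i _ => real_inner_self_eq_norm_sq (u i)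

/-- key Khintchine-based bound for convex combinations -/
lemma hull_step {ι : Type} [Fintype ι] [DecidableEq ι] {k : ℕ} (x : Fin k → H)
    (W : ℝ) (hW0 : 0 ≤ W)
    (hpair : ∀ v : H, ∑ n, |⟪v, x n⟫| ≤ ‖v‖ * W)
    (w : ι → ℝ) (hw0 : ∀ i, 0 ≤ w i) (hw1 : ∑ i, w i = 1)
    (h : ι → H) (hh : ∀ i, ‖h i‖ ≤ 1) :
    ∑ n, Real.sqrt (∑ i, w i * ⟪h i, x n⟫ ^ 2) ≤ Real.sqrt 3 * W := by
  classical
  set N : ℝ := (2:ℝ) ^ (Fintype.card ι) with hN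
  have hNpos : (0:ℝ) < N := by positivity
  set u : ι → H := fun i => Real.sqrt (w i) • h i with hu
  set v : (ι → Bool) → H := fun ε => ∑ i, sgn (ε i) • u i with hv
  -- per-n Khintchine
  have hpern : ∀ n, N * Real.sqrt (∑ i, w i * ⟪h i, x n⟫ ^ 2)
      ≤ Real.sqrt 3 * ∑ ε : ι → Bool, |⟪v ε, x n⟫| := by
    intro n
    have ha : ∀ i, w i * ⟪h i, x n⟫ ^ 2 = (Real.sqrt (w i) * ⟪h i, x n⟫) ^ 2 := by
      intro i
      rw [mul_pow, Real.sq_sqrt (hw0 i)]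
    have hX : ∀ ε : ι → Bool, ∑ i, sgn (ε i) * (Real.sqrt (w i) * ⟪h i, x n⟫) = ⟪v ε, x n⟫ := by
      intro ε
      rw [hv, inner_sgn_sum]
      refine Finset.sum_congr rfl fun i _ => ?_
      rw [hu, real_inner_smul_left]
    calc N * Real.sqrt (∑ i, w i * ⟪h i, x n⟫ ^ 2)
        = N * Real.sqrt (∑ i, (Real.sqrt (w i) * ⟪h i, x n⟫) ^ 2) := by
          congr 2; exact Finset.sum_congr rfl fun i _ => ha i
      _ ≤ Real.sqrt 3 * ∑ ε : ι → Bool, |∑ i, sgn (ε i) * (Real.sqrt (w i) * ⟪h i, x n⟫)| :=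
          khintchine _
      _ = Real.sqrt 3 * ∑ ε : ι → Bool, |⟪v ε, x n⟫| := by
          congr 1; exact Finset.sum_congr rfl fun ε _ => by rw [hX]
  -- sum over n
  have hsumv : ∑ ε : ι → Bool, ‖v ε‖ ≤ N := by
    have cs := Finset.sum_mul_sq_le_sq_mul_sq Finset.univ
      (fun ε : ι → Bool => ‖v ε‖) (fun _ => (1:ℝ))
    have hnormsq : ∑ ε : ι → Bool, ‖v ε‖ ^ 2 ≤ N := by
      have := sgn_sum_norm_sq u
      rw [hv]
      rw [this]
      have : ∑ i, ‖u i‖ ^ 2 ≤ 1 := by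
        rw [← hw1]
        refine Finset.sum_le_sum fun i _ => ?_
        rw [hu]
        simp only []
        rw [norm_smul]
        have h1 : ‖Real.sqrt (w i)‖ = Real.sqrt (w i) := by
          rw [Real.norm_eq_abs, abs_of_nonneg (Real.sqrt_nonneg _)]
        rw [h1, mul_pow, Real.sq_sqrt (hw0 i)]
        calc w i * ‖h i‖ ^ 2 ≤ w i * 1 := by
              refine mul_le_mul_of_nonneg_left ?_ (hw0 i)
              calc ‖h i‖ ^ 2 ≤ 1 ^ 2 := by
                    exact pow_le_pow_left₀ (norm_nonneg _) (hh i) 2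
                _ = 1 := one_pow 2
          _ = w i := mul_one _
      calc N * ∑ i, ‖u i‖ ^ 2 ≤ N * 1 := mul_le_mul_of_nonneg_left this hNpos.le
        _ = N := mul_one _
    have hcard : ∑ _ε : ι → Bool, (1:ℝ) = N := by
      rw [Finset.sum_const]
      simp [hN, Fintype.card_fun]
    have hsq : (∑ ε : ι → Bool, ‖v ε‖) ^ 2 ≤ N * N := by
      calc (∑ ε : ι → Bool, ‖v ε‖) ^ 2 = (∑ ε : ι → Bool, ‖v ε‖ * 1) ^ 2 := by simp
        _ ≤ (∑ ε : ι → Bool, ‖v ε‖ ^ 2) * (∑ ε : ι → Bool, (1:ℝ) ^ 2) := cs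
        _ ≤ N * N := by
            refine mul_le_mul hnormsq ?_ (by positivity) hNpos.le
            simpa using hcard.le
    have h0 : 0 ≤ ∑ ε : ι → Bool, ‖v ε‖ := Finset.sum_nonneg fun ε _ => norm_nonneg _
    nlinarith [hsq, h0, hNpos]
  -- combine
  have main : N * ∑ n, Real.sqrt (∑ i, w i * ⟪h i, x n⟫ ^ 2)
      ≤ Real.sqrt 3 * (N * W) := by
    calc N * ∑ n, Real.sqrt (∑ i, w i * ⟪h i, x n⟫ ^ 2)
        = ∑ n, N * Real.sqrt (∑ i, w i * ⟪h i, x n⟫ ^ 2) := Finset.mul_sum _ _ _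
      _ ≤ ∑ n, Real.sqrt 3 * ∑ ε : ι → Bool, |⟪v ε, x n⟫| :=
          Finset.sum_le_sum fun n _ => hpern n
      _ = Real.sqrt 3 * ∑ ε : ι → Bool, ∑ n, |⟪v ε, x n⟫| := by
          rw [← Finset.mul_sum, Finset.sum_comm]
      _ ≤ Real.sqrt 3 * ∑ ε : ι → Bool, ‖v ε‖ * W := by
          refine mul_le_mul_of_nonneg_left ?_ (Real.sqrt_nonneg 3)
          exact Finset.sum_le_sum fun ε _ => hpair (v ε)
      _ = Real.sqrt 3 * ((∑ ε : ι → Bool, ‖v ε‖) * W) := by rw [Finset.sum_mul]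
      _ ≤ Real.sqrt 3 * (N * W) := by
          refine mul_le_mul_of_nonneg_left ?_ (Real.sqrt_nonneg 3)
          exact mul_le_mul_of_nonneg_right hsumv hW0
  have := (mul_le_mul_iff_right₀ hNpos).mp (by
    calc N * ∑ n, Real.sqrt (∑ i, w i * ⟪h i, x n⟫ ^ 2)
        ≤ Real.sqrt 3 * (N * W) := main
      _ = N * (Real.sqrt 3 * W) := by ring)
  exact this

lemma sqrt_add_le' (a b : ℝ) (ha : 0 ≤ a) (hb : 0 ≤ b) :
    Real.sqrt (a + b) ≤ Real.sqrt a + Real.sqrt b := by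
  rw [← Real.sqrt_sq (by positivity : (0:ℝ) ≤ Real.sqrt a + Real.sqrt b)]
  apply Real.sqrt_le_sqrt
  nlinarith [Real.sq_sqrt ha, Real.sq_sqrt hb, Real.sqrt_nonneg a, Real.sqrt_nonneg b,
    mul_nonneg (Real.sqrt_nonneg a) (Real.sqrt_nonneg b)]


end AuxSummingProof

set_option maxHeartbeats 2000000 in
/-- Every absolutely 2-summing operator `L : H → B` from a separable Hilbert
space to a Banach space is absolutely 1-summing. -/
theorem statement_7 {H B : Type} [NormedAddCommGroup H] [InnerProductSpace ℝ H]
    [CompleteSpace H] [TopologicalSpace.SeparableSpace H]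
    [NormedAddCommGroup B] [NormedSpace ℝ B] [CompleteSpace B]
    (L : H →ₗ[ℝ] B) (hL : AbsolutelySumming 2 L) :
    AbsolutelySumming 1 L := by
  classical
  obtain ⟨C₂, hC₂, h2⟩ := hL
  have hNE : Nonempty {ψ : H →L[ℝ] ℝ // ‖ψ‖ ≤ 1} := ⟨⟨0, by simp⟩⟩
  refine ⟨2 * C₂, by positivity, ?_⟩
  intro k x
  simp only [one_div_one, Real.rpow_one]
  set W := ⨆ φ : {ψ : H →L[ℝ] ℝ // ‖ψ‖ ≤ 1}, ∑ n, |φ.1 (x n)| with hWdef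
  have hbdd : BddAbove (Set.range fun φ : {ψ : H →L[ℝ] ℝ // ‖ψ‖ ≤ 1} => ∑ n, |φ.1 (x n)|) := by
    refine ⟨∑ n, ‖x n‖, ?_⟩
    rintro r ⟨φ, rfl⟩
    refine Finset.sum_le_sum fun n _ => ?_
    calc |φ.1 (x n)| = ‖φ.1 (x n)‖ := (Real.norm_eq_abs _).symm
      _ ≤ ‖φ.1‖ * ‖x n‖ := φ.1.le_opNorm (x n)
      _ ≤ 1 * ‖x n‖ := mul_le_mul_of_nonneg_right φ.2 (norm_nonneg _)
      _ = ‖x n‖ := one_mul _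
  have hW : ∀ ψ : H →L[ℝ] ℝ, ‖ψ‖ ≤ 1 → ∑ n, |ψ (x n)| ≤ W := fun ψ hψ =>
    le_ciSup hbdd (⟨ψ, hψ⟩ : {ψ : H →L[ℝ] ℝ // ‖ψ‖ ≤ 1})
  have hW0 : 0 ≤ W := by
    have := hW 0 (by simp)
    simpa using this
  have hpair : ∀ v : H, ∑ n, |⟪v, x n⟫| ≤ ‖v‖ * W := by
    intro v
    rcases eq_or_ne v 0 with rfl | hv
    · simp
    · have hvn : 0 < ‖v‖ := norm_pos_iff.mpr hv
      set ψ := InnerProductSpace.toDual ℝ H (‖v‖⁻¹ • v) with hψdef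
      have hψ1 : ‖ψ‖ ≤ 1 := by
        rw [hψdef]
        rw [(InnerProductSpace.toDual ℝ H).norm_map]
        rw [norm_smul, norm_inv, norm_norm, inv_mul_cancel₀ hvn.ne']
      have happ : ∀ n, ψ (x n) = ‖v‖⁻¹ * ⟪v, x n⟫ := fun n => by
        rw [hψdef, InnerProductSpace.toDual_apply_apply, real_inner_smul_left]
      calc ∑ n, |⟪v, x n⟫| = ‖v‖ * ∑ n, |ψ (x n)| := by
            rw [Finset.mul_sum]
            refine (Finset.sum_congr rfl fun n _ => ?_)
            rw [happ n, abs_mul, abs_inv, abs_of_nonneg hvn.le, ← mul_assoc,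
              mul_inv_cancel₀ hvn.ne', one_mul]
        _ ≤ ‖v‖ * W := mul_le_mul_of_nonneg_left (hW ψ hψ1) hvn.le
  -- reduce to √3 bound
  suffices hmain : ∑ n, ‖L (x n)‖ ≤ Real.sqrt 3 * C₂ * W by
    have h32 : Real.sqrt 3 ≤ 2 := by
      nlinarith [Real.sq_sqrt (show (0:ℝ) ≤ 3 by norm_num), Real.sqrt_nonneg 3]
    calc ∑ n, ‖L (x n)‖ ≤ Real.sqrt 3 * C₂ * W := hmain
      _ ≤ 2 * C₂ * W := by nlinarith [mul_nonneg hC₂.le hW0]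
  -- convex set setup
  set S : Set (Fin k → ℝ) := {c | ∃ φ : H →L[ℝ] ℝ, ‖φ‖ ≤ 1 ∧ c = fun n => (φ (x n))^2}
    with hSdef
  set R := ∑ n, ‖x n‖^2 with hRdef
  have hR0 : 0 ≤ R := Finset.sum_nonneg fun n _ => sq_nonneg _
  set K := closure (convexHull ℝ S) with hKdef
  have hSpi : S ⊆ Set.univ.pi fun _ => Set.Icc (0:ℝ) R := by
    rintro c ⟨φ, hφ, rfl⟩ n _
    constructor
    · exact sq_nonneg _
    · calc (φ (x n))^2 = ‖φ (x n)‖^2 := by rw [Real.norm_eq_abs, sq_abs]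
        _ ≤ ‖x n‖^2 := by
            have : ‖φ (x n)‖ ≤ ‖x n‖ := by
              calc ‖φ (x n)‖ ≤ ‖φ‖ * ‖x n‖ := φ.le_opNorm (x n)
                _ ≤ 1 * ‖x n‖ := mul_le_mul_of_nonneg_right hφ (norm_nonneg _)
                _ = ‖x n‖ := one_mul _
            exact pow_le_pow_left₀ (norm_nonneg _) this 2
        _ ≤ R := Finset.single_le_sum (fun m _ => sq_nonneg ‖x m‖) (Finset.mem_univ n)
  have hKpi : K ⊆ Set.univ.pi fun _ => Set.Icc (0:ℝ) R :=
    closure_minimal (convexHull_min hSpi (convex_pi fun _ _ => convex_Icc _ _))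
      (isClosed_set_pi fun _ _ => isClosed_Icc)
  have hKmem : ∀ c ∈ K, ∀ n, 0 ≤ c n ∧ c n ≤ R := by
    intro c hc n
    have := hKpi hc n (Set.mem_univ n)
    exact ⟨this.1, this.2⟩
  have hKconv : Convex ℝ K := (convex_convexHull ℝ S).closure
  have hKcompact : IsCompact K :=
    IsCompact.of_isClosed_subset (isCompact_univ_pi fun _ => isCompact_Icc)
      isClosed_closure hKpi
  have hSne : ((fun _ => 0 : Fin k → ℝ)) ∈ S := by
    refine ⟨0, by simp, ?_⟩
    funext n
    simp
  have hKne : K.Nonempty := ⟨_, subset_closure (subset_convexHull ℝ S hSne)⟩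
  have hSK : S ⊆ K := fun c hc => subset_closure (subset_convexHull ℝ S hc)
  -- hull bound
  have hhull : ∀ c ∈ convexHull ℝ S, ∑ n, Real.sqrt (c n) ≤ Real.sqrt 3 * W := by
    intro c hc
    rw [_root_.convexHull_eq] at hc
    obtain ⟨ι, t, wt, z, hw0, hw1, hz, hcm⟩ := hc
    rw [Finset.centerMass_eq_of_sum_1 _ _ hw1] at hcm
    have hzS : ∀ i : ↥t, ∃ φ : H →L[ℝ] ℝ, ‖φ‖ ≤ 1 ∧ z i.1 = fun n => (φ (x n))^2 :=
      fun i => hz i.1 i.2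
    choose φf hφ1 hφ2 using hzS
    set h' : ↥t → H := fun i => (InnerProductSpace.toDual ℝ H).symm (φf i) with hh'def
    have hh1 : ∀ i, ‖h' i‖ ≤ 1 := by
      intro i
      rw [hh'def]
      rw [(InnerProductSpace.toDual ℝ H).symm.norm_map]
      exact hφ1 i
    have hinner : ∀ (i : ↥t) (y : H), ⟪h' i, y⟫ = φf i y := fun i y =>
      InnerProductSpace.toDual_symm_apply
    have hw1' : ∑ i : ↥t, wt i.1 = 1 := by
      rw [Finset.sum_coe_sort t wt]
      exact hw1
    have hcn : ∀ n, c n = ∑ i : ↥t, wt i.1 * ⟪h' i, x n⟫^2 := by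
      intro n
      rw [← hcm, Finset.sum_apply]
      rw [← Finset.sum_coe_sort t (fun i => (wt i • z i) n)]
      refine Finset.sum_congr rfl fun i _ => ?_
      have hzi : z i.1 n = (φf i (x n))^2 := by rw [hφ2 i]
      rw [Pi.smul_apply, smul_eq_mul, hzi, hinner]
    calc ∑ n, Real.sqrt (c n)
        = ∑ n, Real.sqrt (∑ i : ↥t, wt i.1 * ⟪h' i, x n⟫^2) := by
          refine Finset.sum_congr rfl fun n _ => ?_
          rw [hcn n]
      _ ≤ Real.sqrt 3 * W := by
          exact hull_step (ι := ↥t) (H := H) x W hW0 hpair (fun i => wt i.1)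
            (fun i => hw0 i.1 i.2) hw1' h' hh1
  have hhullK : ∀ c ∈ K, ∑ n, Real.sqrt (c n) ≤ Real.sqrt 3 * W := by
    have hcont : Continuous (fun c : Fin k → ℝ => ∑ n, Real.sqrt (c n)) :=
      continuous_finset_sum _ fun n _ => Real.continuous_sqrt.comp (continuous_apply n)
    have hclosed : IsClosed {c : Fin k → ℝ | ∑ n, Real.sqrt (c n) ≤ Real.sqrt 3 * W} :=
      isClosed_le hcont continuous_const
    have hsub : convexHull ℝ S ⊆ {c : Fin k → ℝ | ∑ n, Real.sqrt (c n) ≤ Real.sqrt 3 * W} :=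
      fun c hc => hhull c hc
    intro c hc
    exact closure_minimal hsub hclosed hc
  -- δ-argument
  refine le_of_forall_pos_le_add fun ε hε => ?_
  set δ := (ε / (C₂ * (k+1)))^2 with hδdef
  have hδpos : 0 < δ := by positivity
  have hFcont : ContinuousOn (fun c : Fin k → ℝ => ∑ n, Real.sqrt (c n + δ)) K :=
    (continuous_finset_sum _ fun n _ =>
      Real.continuous_sqrt.comp ((continuous_apply n).add continuous_const)).continuousOn
  obtain ⟨cs, hcsK, hcsmax⟩ := hKcompact.exists_isMaxOn hKne hFcont
  rw [isMaxOn_iff] at hcsmax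
  set s : Fin k → ℝ := fun n => Real.sqrt (cs n + δ) with hsdef
  have hcs0 : ∀ n, 0 ≤ cs n := fun n => (hKmem cs hcsK n).1
  have hcsR : ∀ n, cs n ≤ R := fun n => (hKmem cs hcsK n).2
  have hspos : ∀ n, 0 < s n := fun n => Real.sqrt_pos.mpr (by linarith [hcs0 n])
  set Z := ∑ n, s n with hZdef
  have hZ0 : 0 ≤ Z := Finset.sum_nonneg fun n _ => (hspos n).le
  have hδs : 0 < Real.sqrt δ := Real.sqrt_pos.mpr hδpos
  -- variational inequality
  have hvar : ∀ c ∈ K, ∑ n, c n / s n ≤ Z := by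
    intro c hcK
    have hc0 : ∀ n, 0 ≤ c n := fun n => (hKmem c hcK n).1
    have hcR : ∀ n, c n ≤ R := fun n => (hKmem c hcK n).2
    set B : ℝ := k * (R * R) / (δ * Real.sqrt δ) + 1 with hBdef
    have hB0 : 0 < B := by positivity
    have hstep : ∀ s' : ℝ, 0 < s' → s' ≤ 1 → ∑ n, (c n - cs n) / s n ≤ s' * B := by
      intro s' hs'0 hs'1
      set cmid : Fin k → ℝ := fun n => cs n + s' * (c n - cs n) with hcmiddef
      have hcmidK : cmid ∈ K := by
        have hmem := hKconv hcsK hcK (by linarith : (0:ℝ) ≤ 1 - s') hs'0.le (by ring)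
        have : (1 - s') • cs + s' • c = cmid := by
          funext n
          simp only [Pi.add_apply, Pi.smul_apply, smul_eq_mul, hcmiddef]
          ring
        rwa [this] at hmem
      have hcmid0 : ∀ n, 0 ≤ cmid n := fun n => (hKmem cmid hcmidK n).1
      have hmax' := hcsmax cmid hcmidK
      set D : Fin k → ℝ := fun n => Real.sqrt (cmid n + δ) + s n with hDdef
      have hDlb : ∀ n, 2 * Real.sqrt δ ≤ D n := by
        intro n
        have h1 : Real.sqrt δ ≤ Real.sqrt (cmid n + δ) :=
          Real.sqrt_le_sqrt (by linarith [hcmid0 n])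
        have h2 : Real.sqrt δ ≤ s n := Real.sqrt_le_sqrt (by linarith [hcs0 n])
        simp only [hDdef]
        linarith
      have hD0 : ∀ n, 0 < D n := fun n => lt_of_lt_of_le (by linarith) (hDlb n)
      have hdiff : ∀ n, Real.sqrt (cmid n + δ) - s n = s' * (c n - cs n) / D n := by
        intro n
        rw [eq_div_iff (ne_of_gt (hD0 n))]
        have h1 : Real.sqrt (cmid n + δ) * Real.sqrt (cmid n + δ) = cmid n + δ :=
          Real.mul_self_sqrt (by linarith [hcmid0 n])
        have h2 : s n * s n = cs n + δ := Real.mul_self_sqrt (by linarith [hcs0 n])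
        calc (Real.sqrt (cmid n + δ) - s n) * D n
            = Real.sqrt (cmid n + δ) * Real.sqrt (cmid n + δ) - s n * s n := by
              simp only [hDdef]; ring
          _ = (cmid n + δ) - (cs n + δ) := by rw [h1, h2]
          _ = s' * (c n - cs n) := by simp only [hcmiddef]; ring
      have hsum2 : ∑ n, (c n - cs n) / D n ≤ 0 := by
        have hsum1 : ∑ n, s' * ((c n - cs n) / D n) ≤ 0 := by
          have hle : ∑ n, (Real.sqrt (cmid n + δ) - s n) ≤ 0 := by
            rw [Finset.sum_sub_distrib]
            have : ∑ n, Real.sqrt (cmid n + δ) ≤ ∑ n, s n := hmax'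
            linarith
          calc ∑ n, s' * ((c n - cs n) / D n)
              = ∑ n, (Real.sqrt (cmid n + δ) - s n) := by
                refine Finset.sum_congr rfl fun n _ => ?_
                rw [hdiff n, mul_div_assoc]
            _ ≤ 0 := hle
        rw [← Finset.mul_sum] at hsum1
        nlinarith [hsum1, hs'0]
      have hcomp : ∀ n, (c n - cs n) / s n
          ≤ 2 * ((c n - cs n) / D n) + s' * (R * R / (δ * Real.sqrt δ)) := by
        intro n
        have habs : |c n - cs n| ≤ R := abs_le.mpr ⟨by linarith [hc0 n, hcsR n],
          by linarith [hcR n, hcs0 n]⟩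
        have hden1 := hDlb n
        have hslb : Real.sqrt δ ≤ s n := Real.sqrt_le_sqrt (by linarith [hcs0 n])
        have hdd : |1 / s n - 2 / D n| ≤ s' * R / (δ * Real.sqrt δ) := by
          have h1 : 1 / s n - 2 / D n = (D n - 2 * s n) / (s n * D n) := by
            rw [div_sub_div _ _ (ne_of_gt (hspos n)) (ne_of_gt (hD0 n))]
            congr 1
            ring
          have h2 : D n - 2 * s n = s' * (c n - cs n) / D n := by
            have he : D n - 2 * s n = Real.sqrt (cmid n + δ) - s n := by
              simp only [hDdef]; ring
            rw [he, hdiff n]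
          rw [h1, h2, abs_div, abs_div, abs_mul, div_div]
          rw [abs_of_pos (hD0 n), abs_of_pos (mul_pos (hspos n) (hD0 n))]
          have hnum : |s'| * |c n - cs n| ≤ s' * R := by
            rw [abs_of_pos hs'0]
            exact mul_le_mul_of_nonneg_left habs hs'0.le
          have hden2 : Real.sqrt δ * (2 * Real.sqrt δ) ≤ s n * D n :=
            mul_le_mul hslb hden1 (by positivity) (hspos n).le
          have hq : Real.sqrt δ * (2 * Real.sqrt δ) = 2 * δ := by
            rw [show Real.sqrt δ * (2 * Real.sqrt δ)
              = 2 * (Real.sqrt δ * Real.sqrt δ) by ring, Real.mul_self_sqrt hδpos.le]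
          have hden2' : 2 * δ ≤ s n * D n := hq ▸ hden2
          have hPlb : δ * Real.sqrt δ ≤ D n * (s n * D n) := by
            have h4 : (2 * Real.sqrt δ) * (2 * δ) ≤ D n * (s n * D n) :=
              mul_le_mul hden1 hden2' (by positivity) (hD0 n).le
            nlinarith [hδs, hδpos]
          exact div_le_div₀ (by positivity) hnum (by positivity) hPlb
        have hsplit : (c n - cs n) / s n
            = (c n - cs n) * (2 / D n) + (c n - cs n) * (1 / s n - 2 / D n) := by
          rw [div_eq_mul_one_div]
          ring
        have t2 : (c n - cs n) * (1 / s n - 2 / D n) ≤ R * (s' * R / (δ * Real.sqrt δ)) := by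
          calc (c n - cs n) * (1 / s n - 2 / D n)
              ≤ |(c n - cs n) * (1 / s n - 2 / D n)| := le_abs_self _
            _ = |c n - cs n| * |1 / s n - 2 / D n| := abs_mul _ _
            _ ≤ R * (s' * R / (δ * Real.sqrt δ)) :=
                mul_le_mul habs hdd (abs_nonneg _) hR0
        have t1 : (c n - cs n) * (2 / D n) = 2 * ((c n - cs n) / D n) := by ring
        have t3 : R * (s' * R / (δ * Real.sqrt δ)) = s' * (R * R / (δ * Real.sqrt δ)) := by
          ring
        rw [hsplit, t1]
        linarith [t2, t3.le]
      have hsum3 : ∑ n, (c n - cs n) / s n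
          ≤ 2 * (∑ n, (c n - cs n) / D n) + (k:ℝ) * (s' * (R * R / (δ * Real.sqrt δ))) := by
        calc ∑ n, (c n - cs n) / s n
            ≤ ∑ n, (2 * ((c n - cs n) / D n) + s' * (R * R / (δ * Real.sqrt δ))) :=
              Finset.sum_le_sum fun n _ => hcomp n
          _ = 2 * (∑ n, (c n - cs n) / D n) + (k:ℝ) * (s' * (R * R / (δ * Real.sqrt δ))) := by
              rw [Finset.sum_add_distrib, ← Finset.mul_sum, Finset.sum_const,
                Finset.card_univ, Fintype.card_fin, nsmul_eq_mul]
      have hkr : (k:ℝ) * (s' * (R * R / (δ * Real.sqrt δ)))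
          = s' * ((k:ℝ) * (R * R) / (δ * Real.sqrt δ)) := by ring
      have hBB : s' * ((k:ℝ) * (R * R) / (δ * Real.sqrt δ)) ≤ s' * B := by
        refine mul_le_mul_of_nonneg_left ?_ hs'0.le
        rw [hBdef]
        linarith
      linarith [hsum3, hsum2, hkr.le, hkr.ge, hBB]
    -- conclude A ≤ 0
    have hA : ∑ n, (c n - cs n) / s n ≤ 0 := by
      refine le_of_forall_pos_le_add fun η hη => ?_
      have hmin0 : 0 < min 1 (η / B) := lt_min one_pos (div_pos hη hB0)
      have := hstep (min 1 (η / B)) hmin0 (min_le_left _ _)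
      calc ∑ n, (c n - cs n) / s n ≤ min 1 (η / B) * B := this
        _ ≤ (η / B) * B := mul_le_mul_of_nonneg_right (min_le_right _ _) hB0.le
        _ = η := div_mul_cancel₀ _ (ne_of_gt hB0)
        _ ≤ 0 + η := by linarith
    have hdiag : ∀ n, cs n / s n ≤ s n := by
      intro n
      rw [div_le_iff₀ (hspos n)]
      have hms := Real.mul_self_sqrt (show 0 ≤ cs n + δ by linarith [hcs0 n])
      calc cs n ≤ cs n + δ := by linarith
        _ = s n * s n := by rw [hsdef]; exact hms.symm
    calc ∑ n, c n / s n = ∑ n, ((c n - cs n) / s n + cs n / s n) := by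
          refine Finset.sum_congr rfl fun n _ => ?_
          rw [← add_div]
          ring_nf
      _ = (∑ n, (c n - cs n) / s n) + ∑ n, cs n / s n := Finset.sum_add_distrib
      _ ≤ 0 + ∑ n, s n := add_le_add hA (Finset.sum_le_sum fun n _ => hdiag n)
      _ = Z := by rw [zero_add]
  -- 2-summing application
  set y : Fin k → H := fun n => (Real.sqrt (s n))⁻¹ • x n with hydef
  have hsq0 : ∀ n, 0 < Real.sqrt (s n) := fun n => Real.sqrt_pos.mpr (hspos n)
  have happ := h2 k y
  have hLy : ∀ n, ‖L (y n)‖ ^ (2:ℝ) = ‖L (x n)‖^2 / s n := by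
    intro n
    have hmap : L (y n) = (Real.sqrt (s n))⁻¹ • L (x n) := by rw [hydef]; exact L.map_smul _ _
    rw [Real.rpow_two, hmap, norm_smul, norm_inv, Real.norm_eq_abs,
      abs_of_nonneg (Real.sqrt_nonneg _), mul_pow, inv_pow, Real.sq_sqrt (hspos n).le]
    rw [div_eq_mul_inv, mul_comm]
  have hLHS : (∑ n, ‖L (y n)‖ ^ (2:ℝ)) ^ ((1:ℝ)/2) = Real.sqrt (∑ n, ‖L (x n)‖^2 / s n) := by
    rw [← Real.sqrt_eq_rpow]
    congr 1
    exact Finset.sum_congr rfl fun n _ => hLy n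
  have hRHSb : (⨆ φ : {ψ : H →L[ℝ] ℝ // ‖ψ‖ ≤ 1}, (∑ n, |φ.1 (y n)| ^ (2:ℝ)) ^ ((1:ℝ)/2))
      ≤ Real.sqrt Z := by
    refine ciSup_le fun φ => ?_
    rw [← Real.sqrt_eq_rpow]
    have hφy : ∑ n, |φ.1 (y n)| ^ (2:ℝ) = ∑ n, (φ.1 (x n))^2 / s n := by
      refine Finset.sum_congr rfl fun n _ => ?_
      rw [Real.rpow_two, sq_abs, hydef]
      simp only [ContinuousLinearMap.map_smul, smul_eq_mul]
      rw [mul_pow, inv_pow, Real.sq_sqrt (hspos n).le]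
      rw [div_eq_mul_inv, mul_comm]
    rw [hφy]
    refine Real.sqrt_le_sqrt ?_
    have hcS : (fun n => (φ.1 (x n))^2) ∈ S := ⟨φ.1, φ.2, rfl⟩
    exact hvar _ (hSK hcS)
  have h2' : Real.sqrt (∑ n, ‖L (x n)‖^2 / s n) ≤ C₂ * Real.sqrt Z := by
    rw [← hLHS]
    exact le_trans happ (mul_le_mul_of_nonneg_left hRHSb hC₂.le)
  have hQ0 : 0 ≤ ∑ n, ‖L (x n)‖^2 / s n :=
    Finset.sum_nonneg fun n _ => div_nonneg (sq_nonneg _) (hspos n).le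
  have hQ : ∑ n, ‖L (x n)‖^2 / s n ≤ C₂^2 * Z := by
    nlinarith [h2', Real.sq_sqrt hQ0, Real.sq_sqrt hZ0, Real.sqrt_nonneg Z,
      Real.sqrt_nonneg (∑ n, ‖L (x n)‖^2 / s n), hC₂]
  have hcs : (∑ n, ‖L (x n)‖)^2 ≤ Z * (∑ n, ‖L (x n)‖^2 / s n) := by
    have hCS := Finset.sum_mul_sq_le_sq_mul_sq Finset.univ
      (fun n => Real.sqrt (s n)) (fun n => ‖L (x n)‖ / Real.sqrt (s n))
    have hfg : ∀ n : Fin k, Real.sqrt (s n) * (‖L (x n)‖ / Real.sqrt (s n)) = ‖L (x n)‖ := by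
      intro n
      rw [mul_comm, div_mul_cancel₀ _ (ne_of_gt (hsq0 n))]
    have hf2 : ∀ n : Fin k, (Real.sqrt (s n))^2 = s n := fun n => Real.sq_sqrt (hspos n).le
    have hg2 : ∀ n : Fin k, (‖L (x n)‖ / Real.sqrt (s n))^2 = ‖L (x n)‖^2 / s n := by
      intro n
      rw [div_pow, hf2]
    calc (∑ n, ‖L (x n)‖)^2
        = (∑ n, Real.sqrt (s n) * (‖L (x n)‖ / Real.sqrt (s n)))^2 := by
          congr 1
          exact (Finset.sum_congr rfl fun n _ => hfg n).symm
      _ ≤ (∑ n, (Real.sqrt (s n))^2) * (∑ n, (‖L (x n)‖ / Real.sqrt (s n))^2) := hCS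
      _ = Z * (∑ n, ‖L (x n)‖^2 / s n) := by
          congr 1
          · exact Finset.sum_congr rfl fun n _ => hf2 n
          · exact Finset.sum_congr rfl fun n _ => hg2 n
  have hfinal1 : ∑ n, ‖L (x n)‖ ≤ C₂ * Z := by
    have h0 : 0 ≤ ∑ n, ‖L (x n)‖ := Finset.sum_nonneg fun n _ => norm_nonneg _
    nlinarith [hcs, hQ, hZ0, h0, hC₂, sq_nonneg (∑ n, ‖L (x n)‖ - C₂ * Z),
      sq_nonneg (∑ n, ‖L (x n)‖ + C₂ * Z), mul_nonneg hC₂.le hZ0]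
  have hZb : Z ≤ Real.sqrt 3 * W + (k:ℝ) * Real.sqrt δ := by
    calc Z = ∑ n, Real.sqrt (cs n + δ) := rfl
      _ ≤ ∑ n, (Real.sqrt (cs n) + Real.sqrt δ) :=
          Finset.sum_le_sum fun n _ => sqrt_add_le' _ _ (hcs0 n) hδpos.le
      _ = (∑ n, Real.sqrt (cs n)) + (k:ℝ) * Real.sqrt δ := by
          rw [Finset.sum_add_distrib, Finset.sum_const, Finset.card_univ,
            Fintype.card_fin, nsmul_eq_mul]
      _ ≤ Real.sqrt 3 * W + (k:ℝ) * Real.sqrt δ :=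
          add_le_add_left (hhullK cs hcsK) _
  have hδse : Real.sqrt δ = ε / (C₂ * ((k:ℝ)+1)) := by
    rw [hδdef]
    exact Real.sqrt_sq (by positivity)
  have hlast : C₂ * ((k:ℝ) * Real.sqrt δ) ≤ ε := by
    rw [hδse]
    rw [show C₂ * ((k:ℝ) * (ε / (C₂ * ((k:ℝ)+1)))) = ε * ((C₂ * k) / (C₂ * ((k:ℝ)+1))) by
      ring]
    have hle : (C₂ * (k:ℝ)) / (C₂ * ((k:ℝ)+1)) ≤ 1 := by
      rw [div_le_one (by positivity)]
      nlinarith [hC₂]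
    nlinarith [hε.le, hle, hε]
  calc ∑ n, ‖L (x n)‖ ≤ C₂ * Z := hfinal1
    _ ≤ C₂ * (Real.sqrt 3 * W + (k:ℝ) * Real.sqrt δ) :=
        mul_le_mul_of_nonneg_left hZb hC₂.le
    _ = Real.sqrt 3 * C₂ * W + C₂ * ((k:ℝ) * Real.sqrt δ) := by ring
    _ ≤ Real.sqrt 3 * C₂ * W + ε := by linarith [hlast]
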